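/- Let a, b be positive integers with a ≡ b (mod 4) and both odd. In ℚ₂³ with quadratic form Q(x,y,z) = a x² + a y² + b z², the product of symmetries σ = τ_{e₂+e₃} τ_{e₁+e₃} is well defined (both vectors are anisotropic since Q(e₂+e₃) = Q(e₁+e₃) = a+b ≠ 0), maps the lattice ℤ₂³ to itself, and satisfies σ(e₃) ≡ e₁ (mod 2ℤ₂³). -/

import Mathlib

private lemma odd_norm_one (u : ℤ) (h : Odd u) : ‖(u : ℚ_[2])‖ = 1 := by
  refine le_antisymm (Padic.norm_int_le_one u) ?_
  by_contra hlt
  rw [not_le] at hlt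
  have := (Padic.norm_intCast_lt_one_iff (k := u)).mp hlt
  rw [Int.odd_iff] at h
  omega

private lemma ult_sub (x y : ℚ_[2]) (hx : ‖x‖ ≤ 1) (hy : ‖y‖ ≤ 1) : ‖x - y‖ ≤ 1 := by
  rw [sub_eq_add_neg]
  refine le_trans (Padic.nonarchimedean _ _) (max_le hx ?_)
  rwa [norm_neg]

set_option maxHeartbeats 4000000 in
theorem stmt_9 (a b : ℤ) (hapos : 0 < a) (hbpos : 0 < b)
    (haodd : Odd a) (hbodd : Odd b) (hab : a ≡ b [ZMOD 4]) :
    letI Q : (Fin 3 → ℚ_[2]) → ℚ_[2] :=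
      fun v => (a : ℚ_[2]) * v 0 ^ 2 + (a : ℚ_[2]) * v 1 ^ 2 + (b : ℚ_[2]) * v 2 ^ 2
    letI B : (Fin 3 → ℚ_[2]) → (Fin 3 → ℚ_[2]) → ℚ_[2] :=
      fun v w => (a : ℚ_[2]) * (v 0 * w 0) + (a : ℚ_[2]) * (v 1 * w 1) +
        (b : ℚ_[2]) * (v 2 * w 2)
    letI τ : (Fin 3 → ℚ_[2]) → (Fin 3 → ℚ_[2]) → (Fin 3 → ℚ_[2]) :=
      fun v w => w - (2 * B v w / Q v) • v
    letI e : Fin 3 → (Fin 3 → ℚ_[2]) := fun i => Pi.single i 1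
    letI σ : (Fin 3 → ℚ_[2]) → (Fin 3 → ℚ_[2]) :=
      fun w => τ (e 1 + e 2) (τ (e 0 + e 2) w)
    Q (e 1 + e 2) ≠ 0 ∧ Q (e 0 + e 2) ≠ 0 ∧
    (∀ v : Fin 3 → ℚ_[2], (∀ i, ‖v i‖ ≤ 1) → ∀ i, ‖σ v i‖ ≤ 1) ∧
    (∃ w : Fin 3 → ℚ_[2], (∀ i, ‖w i‖ ≤ 1) ∧ σ (e 2) = e 0 + (2 : ℚ_[2]) • w) := by
  obtain ⟨k, hk⟩ : (4:ℤ) ∣ b - a := hab.dvd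
  obtain ⟨u, hu⟩ : ∃ u : ℤ, u = a + 2 * k := ⟨_, rfl⟩
  have huodd : Odd u := by
    rcases haodd with ⟨m, hm⟩; exact ⟨m + k, by omega⟩
  have hune : ((u:ℚ_[2])) ≠ 0 := by
    intro h
    have := odd_norm_one u huodd
    rw [h, norm_zero] at this; norm_num at this
  have hA : (a:ℚ_[2]) = (u:ℚ_[2]) - 2 * (k:ℚ_[2]) := by
    have h : a = u - 2 * k := by omega
    rw [h]; push_cast; ring
  have hB : (b:ℚ_[2]) = (u:ℚ_[2]) + 2 * (k:ℚ_[2]) := by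
    have h : b = u + 2 * k := by omega
    rw [h]; push_cast; ring
  have hU : (a:ℚ_[2]) + (b:ℚ_[2]) = 2 * (u:ℚ_[2]) := by rw [hA, hB]; ring
  have hne : ((a:ℚ_[2]) + (b:ℚ_[2])) ≠ 0 := by
    rw [hU]; exact mul_ne_zero two_ne_zero hune
  have key : ∀ x y : ℚ_[2], ‖x‖ ≤ 1 → ‖y‖ ≤ 1 →
      ‖2 * ((a:ℚ_[2]) * x + (b:ℚ_[2]) * y) / ((a:ℚ_[2]) + (b:ℚ_[2]))‖ ≤ 1 := by
    intro x y hx hy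
    rw [hU, mul_div_mul_left _ _ (two_ne_zero), norm_div, odd_norm_one u huodd, div_one]
    refine le_trans (Padic.nonarchimedean _ _) (max_le ?_ ?_) <;>
      rw [norm_mul] <;>
      exact mul_le_one₀ (Padic.norm_int_le_one _) (norm_nonneg _) (by assumption)
  refine ⟨?_, ?_, ?_, ?_⟩
  · simp (config := { decide := true }) [Pi.single_apply]
    exact hne
  · simp (config := { decide := true }) [Pi.single_apply]
    exact hne
  · intro v hv i
    fin_cases i <;> simp (config := { decide := true }) [Pi.single_apply]
    · exact ult_sub _ _ (hv 0) (key (v 0) (v 2) (hv 0) (hv 2))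
    · exact ult_sub _ _ (hv 1)
        (key (v 1) _ (hv 1) (ult_sub _ _ (hv 2) (key (v 0) (v 2) (hv 0) (hv 2))))
    · exact ult_sub _ _ (ult_sub _ _ (hv 2) (key (v 0) (v 2) (hv 0) (hv 2)))
        (key (v 1) _ (hv 1) (ult_sub _ _ (hv 2) (key (v 0) (v 2) (hv 0) (hv 2))))
  · refine ⟨![-(((b - k : ℤ) : ℚ_[2]) / (u:ℚ_[2])),
        ((k * b : ℤ) : ℚ_[2]) / ((u:ℚ_[2]))^2,
        2 * ((k ^ 2 : ℤ) : ℚ_[2]) / ((u:ℚ_[2]))^2], ?_, ?_⟩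
    · intro i
      fin_cases i
      · show ‖-(((b - k : ℤ) : ℚ_[2]) / (u:ℚ_[2]))‖ ≤ 1
        rw [norm_neg, norm_div, odd_norm_one u huodd, div_one]
        exact Padic.norm_int_le_one _
      · show ‖((k * b : ℤ) : ℚ_[2]) / ((u:ℚ_[2]))^2‖ ≤ 1
        rw [norm_div, norm_pow, odd_norm_one u huodd, one_pow, div_one]
        exact Padic.norm_int_le_one _
      · show ‖2 * ((k ^ 2 : ℤ) : ℚ_[2]) / ((u:ℚ_[2]))^2‖ ≤ 1
        rw [norm_div, norm_pow, odd_norm_one u huodd, one_pow, div_one, norm_mul]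
        refine mul_le_one₀ ?_ (norm_nonneg _) (Padic.norm_int_le_one _)
        have h2 : ‖(2:ℚ_[2])‖ = 2⁻¹ := by simpa using Padic.norm_p (p := 2)
        rw [h2]; norm_num
    · funext i
      fin_cases i <;>
        simp (config := { decide := true }) [Pi.single_apply] <;>
        push_cast <;> rw [hA, hB] <;> field_simp [hune] <;> ring
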